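/- arXiv:1305.4891 — 2 statements merged into one kernel-verified Lean document; each statement's English description precedes it below -/
import Mathlib

section
/- Let (X̄, Ȳ) be an optimal solution of the convex program min{‖X‖_* + γ‖Y‖₁ : eᵀXe = k², X_{ij} + Y_{ij} = 0 for all ij ∈ Ẽ, X ∈ [0,1]^{V×V}} such that X̄ = v̄ v̄ᵀ for the characteristic vector v̄ of a k-subset V̄, and Ȳ = −P_{Ẽ}(X̄). Then for every other k-subset V̂ with X̂ = v̂ v̂ᵀ and Ŷ = −P_{Ẽ}(X̂), we have ‖Ŷ‖₁ ≥ ‖Ȳ‖₁, and hence d(G(V̂)) ≤ d(G(V̄)); i.e., G(V̄) is a maximum density k-subgraph of G. -/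
open Matrix Finset

variable {V : Type*} [Fintype V] [DecidableEq V]

/-- Spectral (operator) norm of a real square matrix. -/
noncomputable def specNorm (A : Matrix V V ℝ) : ℝ :=
  ‖LinearMap.toContinuousLinearMap (Matrix.toEuclideanLin A)‖

/-- Nuclear norm of a real square matrix, via duality with the spectral norm. -/
noncomputable def nuclearNorm (A : Matrix V V ℝ) : ℝ :=
  sSup {x : ℝ | ∃ U : Matrix V V ℝ, specNorm U ≤ 1 ∧ x = Matrix.trace (Aᵀ * U)}

/-- Entrywise ℓ₁ norm of a matrix. -/
def l1Norm (A : Matrix V V ℝ) : ℝ := ∑ i, ∑ j, |A i j|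

/-- The nuclear norm of `v vᵀ`, for `v` the characteristic vector of a finite set `S`,
equals `S.card`. -/
lemma nuclearNorm_charVec (S : Finset V) (v : V → ℝ)
    (hv : ∀ i, v i = if i ∈ S then 1 else 0) :
    nuclearNorm (Matrix.vecMulVec v v) = S.card := by
  classical
  set w : EuclideanSpace ℝ V := (WithLp.equiv 2 (V → ℝ)).symm v with hw
  have hwv : ∀ i, w i = v i := fun i => rfl
  have hsq : ∀ i, v i * v i = if i ∈ S then 1 else 0 := by
    intro i; rw [hv]; split_ifs <;> norm_num
  have hnormsq : inner (𝕜 := ℝ) w w = (S.card : ℝ) := by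
    rw [PiLp.inner_apply]
    simp only [RCLike.inner_apply, conj_trivial, hwv, hsq]
    rw [Finset.sum_boole]
    simp
  have htr : ∀ U : Matrix V V ℝ,
      Matrix.trace ((Matrix.vecMulVec v v)ᵀ * U) = inner (𝕜 := ℝ) w (Matrix.toEuclideanLin U w) := by
    intro U
    rw [Matrix.trace, PiLp.inner_apply]
    simp only [Matrix.diag_apply, Matrix.mul_apply, Matrix.transpose_apply,
      Matrix.vecMulVec_apply, RCLike.inner_apply, conj_trivial, hwv,
      Matrix.toEuclideanLin_apply]
    rw [Finset.sum_comm]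
    congr 1
    ext j
    simp only [Matrix.mulVec, dotProduct]
    rw [Finset.sum_mul]
    congr 1; ext i
    have : ((WithLp.equiv 2 (V → ℝ)) w) i = v i := rfl
    rw [hwv]; ring
  have hub : ∀ x ∈ {x : ℝ | ∃ U : Matrix V V ℝ, specNorm U ≤ 1 ∧
      x = Matrix.trace ((Matrix.vecMulVec v v)ᵀ * U)}, x ≤ (S.card : ℝ) := by
    rintro x ⟨U, hU, rfl⟩
    rw [htr U]
    set L := LinearMap.toContinuousLinearMap (Matrix.toEuclideanLin U) with hL
    have hLw : Matrix.toEuclideanLin U w = L w := rfl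
    rw [hLw]
    calc inner (𝕜 := ℝ) w (L w) ≤ ‖w‖ * ‖L w‖ := real_inner_le_norm _ _
      _ ≤ ‖w‖ * (‖L‖ * ‖w‖) := by gcongr; exact L.le_opNorm w
      _ ≤ ‖w‖ * (1 * ‖w‖) := by gcongr; exact hU
      _ = ‖w‖ ^ 2 := by ring
      _ = (S.card : ℝ) := by rw [← real_inner_self_eq_norm_sq, hnormsq]
  have hmem : (S.card : ℝ) ∈ {x : ℝ | ∃ U : Matrix V V ℝ, specNorm U ≤ 1 ∧
      x = Matrix.trace ((Matrix.vecMulVec v v)ᵀ * U)} := by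
    refine ⟨1, ?_, ?_⟩
    · have : LinearMap.toContinuousLinearMap (Matrix.toEuclideanLin (1 : Matrix V V ℝ))
          = ContinuousLinearMap.id ℝ (EuclideanSpace ℝ V) := by
        ext x
        simp [Matrix.toEuclideanLin_apply, Matrix.one_mulVec]
      rw [specNorm, this]
      exact ContinuousLinearMap.norm_id_le
    · rw [htr 1, Matrix.toEuclideanLin_apply]
      simp only [Matrix.one_mulVec]
      exact hnormsq.symm
  exact le_antisymm (csSup_le ⟨_, hmem⟩ hub) (le_csSup ⟨_, hub⟩ hmem)

section counting
variable (G : SimpleGraph V) [DecidableRel G.Adj]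

/-- Number of ordered distinct non-adjacent pairs inside `V'`. -/
def Ncount (V' : Finset V) : ℕ :=
  ((univ : Finset (V × V)).filter
    (fun p => p.1 ≠ p.2 ∧ ¬ G.Adj p.1 p.2 ∧ p.1 ∈ V' ∧ p.2 ∈ V')).card

/-- Number of ordered adjacent pairs inside `V'`. -/
def Acount (V' : Finset V) : ℕ :=
  ((univ : Finset (V × V)).filter
    (fun p => G.Adj p.1 p.2 ∧ p.1 ∈ V' ∧ p.2 ∈ V')).card

lemma l1_eq_Ncount (V' : Finset V) (v : V → ℝ)
    (hv : ∀ i, v i = if i ∈ V' then 1 else 0)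
    (X Y : Matrix V V ℝ) (hX : X = Matrix.vecMulVec v v)
    (hY : ∀ i j, Y i j = if i ≠ j ∧ ¬ G.Adj i j then -(X i j) else 0) :
    l1Norm Y = (Ncount G V' : ℝ) := by
  have habs : ∀ i j, |Y i j|
      = if i ≠ j ∧ ¬ G.Adj i j ∧ i ∈ V' ∧ j ∈ V' then 1 else 0 := by
    intro i j
    rw [hY, hX]
    simp only [Matrix.vecMulVec_apply, hv]
    split_ifs <;> simp_all
  unfold l1Norm
  simp only [habs]
  rw [← Finset.sum_product', Finset.sum_boole, Ncount]
  norm_num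

lemma Ncount_add_Acount (V' : Finset V) :
    Ncount G V' + Acount G V'
      = ((univ : Finset (V × V)).filter
          (fun p => p.1 ≠ p.2 ∧ p.1 ∈ V' ∧ p.2 ∈ V')).card := by
  classical
  have h := Finset.card_filter_add_card_filter_not
    (s := (univ : Finset (V × V)).filter (fun p => p.1 ≠ p.2 ∧ p.1 ∈ V' ∧ p.2 ∈ V'))
    (p := fun p => G.Adj p.1 p.2)
  rw [Finset.filter_filter, Finset.filter_filter] at h
  have e1 : ((univ : Finset (V × V)).filter
      (fun p => (p.1 ≠ p.2 ∧ p.1 ∈ V' ∧ p.2 ∈ V') ∧ G.Adj p.1 p.2))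
      = ((univ : Finset (V × V)).filter (fun p => G.Adj p.1 p.2 ∧ p.1 ∈ V' ∧ p.2 ∈ V')) := by
    apply Finset.filter_congr
    intro p _
    constructor
    · rintro ⟨⟨_, h1, h2⟩, ha⟩; exact ⟨ha, h1, h2⟩
    · rintro ⟨ha, h1, h2⟩; exact ⟨⟨G.ne_of_adj ha, h1, h2⟩, ha⟩
  have e2 : ((univ : Finset (V × V)).filter
      (fun p => (p.1 ≠ p.2 ∧ p.1 ∈ V' ∧ p.2 ∈ V') ∧ ¬ G.Adj p.1 p.2))
      = ((univ : Finset (V × V)).filter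
          (fun p => p.1 ≠ p.2 ∧ ¬ G.Adj p.1 p.2 ∧ p.1 ∈ V' ∧ p.2 ∈ V')) := by
    apply Finset.filter_congr
    intro p _
    tauto
  rw [e1, e2] at h
  rw [Ncount, Acount]
  omega

lemma card_distinct_pairs (V' : Finset V) :
    ((univ : Finset (V × V)).filter
        (fun p => p.1 ≠ p.2 ∧ p.1 ∈ V' ∧ p.2 ∈ V')).card + V'.card
      = V'.card * V'.card := by
  classical
  have h := Finset.card_filter_add_card_filter_not
    (s := (univ : Finset (V × V)).filter (fun p => p.1 ∈ V' ∧ p.2 ∈ V'))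
    (p := fun p => p.1 ≠ p.2)
  rw [Finset.filter_filter, Finset.filter_filter] at h
  have e1 : ((univ : Finset (V × V)).filter
      (fun p => (p.1 ∈ V' ∧ p.2 ∈ V') ∧ p.1 ≠ p.2))
      = ((univ : Finset (V × V)).filter (fun p => p.1 ≠ p.2 ∧ p.1 ∈ V' ∧ p.2 ∈ V')) := by
    apply Finset.filter_congr; intro p _; tauto
  have e2 : ((univ : Finset (V × V)).filter
      (fun p => (p.1 ∈ V' ∧ p.2 ∈ V') ∧ ¬ p.1 ≠ p.2))
      = V'.image (fun i => (i, i)) := by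
    ext ⟨a, b⟩
    simp only [Finset.mem_filter, Finset.mem_univ, true_and, ne_eq, not_not,
      Finset.mem_image, Prod.mk.injEq]
    constructor
    · rintro ⟨⟨h1, h2⟩, rfl⟩; exact ⟨a, h1, rfl, rfl⟩
    · rintro ⟨i, hi, rfl, rfl⟩; exact ⟨⟨hi, hi⟩, rfl⟩
  have e3 : ((univ : Finset (V × V)).filter (fun p => p.1 ∈ V' ∧ p.2 ∈ V'))
      = V' ×ˢ V' := by
    ext ⟨a, b⟩; simp
  have e4 : (V'.image (fun i => (i, i))).card = V'.card :=
    Finset.card_image_of_injective _ (fun a b hab => (Prod.mk.injEq _ _ _ _ ▸ hab).1)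
  rw [e1, e2, e3, e4, Finset.card_product] at h
  omega

lemma Acount_eq_two_mul (V' : Finset V) :
    Acount G V' = 2 * (G.edgeFinset.filter (fun e => ∀ v ∈ e, v ∈ V')).card := by
  classical
  let G' : SimpleGraph V :=
    SimpleGraph.mk (fun i j => G.Adj i j ∧ i ∈ V' ∧ j ∈ V')
      ⟨fun {a b} h => ⟨h.1.symm, h.2.2, h.2.1⟩⟩
      ⟨fun a h => G.loopless.irrefl a h.1⟩
  have hdec : DecidableRel G'.Adj := fun a b => instDecidableAnd
  have h2 := SimpleGraph.two_mul_card_edgeFinset (G := G')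
  have hedge : G'.edgeFinset = G.edgeFinset.filter (fun e => ∀ v ∈ e, v ∈ V') := by
    ext e
    induction e using Sym2.ind with
    | _ a b =>
      simp only [SimpleGraph.mem_edgeFinset, Finset.mem_filter, SimpleGraph.mem_edgeSet,
        Sym2.mem_iff]
      constructor
      · rintro ⟨h, ha, hb⟩
        exact ⟨h, by rintro v (rfl | rfl) <;> assumption⟩
      · rintro ⟨h, hall⟩
        exact ⟨h, hall a (Or.inl rfl), hall b (Or.inr rfl)⟩
  rw [Acount, ← hedge, h2]
  congr 1
  ext ⟨a, b⟩
  simp [G']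
end counting

/-- If `(X̄, Ȳ)`, built from a `k`-subset `V̄` as
`X̄ = v̄v̄ᵀ`, `Ȳ = −P_{Ẽ}(X̄)`, is optimal for
`min{‖X‖_* + γ‖Y‖₁ : eᵀXe = k², X_{ij}+Y_{ij}=0 ∀ij∈Ẽ, X∈[0,1]^{V×V}}`, then for every
other `k`-subset `V̂` (with `X̂ = v̂v̂ᵀ`, `Ŷ = −P_{Ẽ}(X̂)`) we have `‖Ŷ‖₁ ≥ ‖Ȳ‖₁` and
`d(G(V̂)) ≤ d(G(V̄))`; i.e. `G(V̄)` is a maximum density `k`-subgraph of `G`. -/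
theorem stmt14 (G : SimpleGraph V) [DecidableRel G.Adj]
    (k : ℕ) (hk : 1 ≤ k) (γ : ℝ) (hγ : 0 < γ)
    (Feas : Matrix V V ℝ → Matrix V V ℝ → Prop)
    (hFeas : ∀ X Y, Feas X Y ↔
      ((∑ i, ∑ j, X i j) = (k : ℝ) ^ 2 ∧
       (∀ i j, (i ≠ j ∧ ¬ G.Adj i j) → X i j + Y i j = 0) ∧
       (∀ i j, 0 ≤ X i j ∧ X i j ≤ 1)))
    (d : Finset V → ℝ)
    (hd : ∀ V' : Finset V,
      d V' = ((G.edgeFinset.filter (fun e => ∀ v ∈ e, v ∈ V')).card : ℝ) / k)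
    (Vb : Finset V) (hVb : Vb.card = k)
    (vb : V → ℝ) (hvb : ∀ i, vb i = if i ∈ Vb then 1 else 0)
    (Xb Yb : Matrix V V ℝ) (hXb : Xb = Matrix.vecMulVec vb vb)
    (hYb : ∀ i j, Yb i j = if i ≠ j ∧ ¬ G.Adj i j then -(Xb i j) else 0)
    (hfeas : Feas Xb Yb)
    (hopt : ∀ X Y, Feas X Y →
      nuclearNorm Xb + γ * l1Norm Yb ≤ nuclearNorm X + γ * l1Norm Y) :
    ∀ (Vh : Finset V), Vh.card = k →
      ∀ (vh : V → ℝ), (∀ i, vh i = if i ∈ Vh then 1 else 0) →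
      ∀ (Xh Yh : Matrix V V ℝ), Xh = Matrix.vecMulVec vh vh →
      (∀ i j, Yh i j = if i ≠ j ∧ ¬ G.Adj i j then -(Xh i j) else 0) →
      l1Norm Yb ≤ l1Norm Yh ∧ d Vh ≤ d Vb := by
  intro Vh hVh vh hvh Xh Yh hXh hYh
  -- (Xh, Yh) is feasible
  have hsumv : (∑ i, vh i) = (k : ℝ) := by
    simp only [hvh]
    rw [Finset.sum_boole]
    simp [hVh]
  have hfeash : Feas Xh Yh := by
    rw [hFeas]
    refine ⟨?_, ?_, ?_⟩
    · rw [hXh]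
      simp only [Matrix.vecMulVec_apply]
      rw [← Finset.sum_mul_sum, hsumv]
      ring
    · intro i j hij
      rw [hYh i j, if_pos hij]
      ring
    · intro i j
      rw [hXh]
      simp only [Matrix.vecMulVec_apply, hvh]
      split_ifs <;> norm_num
  -- the nuclear norms agree
  have hnucb : nuclearNorm Xb = (k : ℝ) := by
    rw [hXb, nuclearNorm_charVec Vb vb hvb, hVb]
  have hnuch : nuclearNorm Xh = (k : ℝ) := by
    rw [hXh, nuclearNorm_charVec Vh vh hvh, hVh]
  -- optimality gives the ℓ₁ comparison
  have hl1 : l1Norm Yb ≤ l1Norm Yh := by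
    have h := hopt Xh Yh hfeash
    rw [hnucb, hnuch] at h
    have hmul : γ * l1Norm Yb ≤ γ * l1Norm Yh := by linarith
    exact le_of_mul_le_mul_left hmul hγ
  refine ⟨hl1, ?_⟩
  -- translate into counts
  have hNb : l1Norm Yb = (Ncount G Vb : ℝ) := l1_eq_Ncount G Vb vb hvb Xb Yb hXb hYb
  have hNh : l1Norm Yh = (Ncount G Vh : ℝ) := l1_eq_Ncount G Vh vh hvh Xh Yh hXh hYh
  have hN : Ncount G Vb ≤ Ncount G Vh := by
    have := hl1
    rw [hNb, hNh] at this
    exact_mod_cast this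
  have hb1 := Ncount_add_Acount G Vb
  have hb2 := card_distinct_pairs (V := V) Vb
  have hh1 := Ncount_add_Acount G Vh
  have hh2 := card_distinct_pairs (V := V) Vh
  rw [hVb] at hb2
  rw [hVh] at hh2
  have hA : Acount G Vh ≤ Acount G Vb := by omega
  have hEb := Acount_eq_two_mul G Vb
  have hEh := Acount_eq_two_mul G Vh
  have hE : (G.edgeFinset.filter (fun e => ∀ v ∈ e, v ∈ Vh)).card
      ≤ (G.edgeFinset.filter (fun e => ∀ v ∈ e, v ∈ Vb)).card := by omega
  rw [hd Vh, hd Vb]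
  have hkpos : (0 : ℝ) < k := by exact_mod_cast hk
  have hE' : ((G.edgeFinset.filter (fun e => ∀ v ∈ e, v ∈ Vh)).card : ℝ)
      ≤ ((G.edgeFinset.filter (fun e => ∀ v ∈ e, v ∈ Vb)).card : ℝ) := by exact_mod_cast hE
  gcongr
end

section
/- Suppose there exist multipliers F, W ∈ ℝ^{V×V}, λ ≥ 0, and M ∈ ℝ_+^{V×V} satisfying: X̄/k + W − λeeᵀ − γ(Ȳ + F) + M = 0; W v̄ = Wᵀ v̄ = 0 and ‖W‖ ≤ 1; P_Ω(F) = 0 and ‖F‖_∞ ≤ 1; F_{ij} = 0 for all (i,j) ∈ E ∪ {vv : v ∈ V}; and M_{ij} = 0 for all (i,j) ∉ V̄×V̄, where X̄ = v̄v̄ᵀ, Ω = (V̄×V̄) ∩ Ẽ, and Ȳ = −P_{Ẽ}(X̄). Then (X̄, Ȳ) is an optimal solution of min{‖X‖_* + γ‖Y‖₁ : eᵀXe = k², X_{ij} + Y_{ij} = 0 ∀ ij ∈ Ẽ, X ∈ [0,1]^{V×V}}. -/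
open Matrix Finset

variable {V : Type*} [Fintype V] [DecidableEq V]

set_option linter.unusedSectionVars false

lemma euclid_norm_sq (x : EuclideanSpace ℝ V) : ‖x‖ ^ 2 = ∑ i, x i ^ 2 := by
  rw [EuclideanSpace.norm_eq, Real.sq_sqrt (by positivity)]
  simp [sq_abs]

lemma mulVec_sq_le (B : Matrix V V ℝ) (x : V → ℝ) :
    ∑ i, (B *ᵥ x) i ^ 2 ≤ specNorm B ^ 2 * ∑ i, x i ^ 2 := by
  set y : EuclideanSpace ℝ V := (WithLp.equiv 2 (V → ℝ)).symm x
  have h := (LinearMap.toContinuousLinearMap (Matrix.toEuclideanLin B)).le_opNorm y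
  have h2 : ‖LinearMap.toContinuousLinearMap (Matrix.toEuclideanLin B) y‖ ^ 2
      ≤ (specNorm B * ‖y‖) ^ 2 := by
    apply pow_le_pow_left₀ (norm_nonneg _) h
  have e1 : ‖LinearMap.toContinuousLinearMap (Matrix.toEuclideanLin B) y‖ ^ 2
      = ∑ i, (B *ᵥ x) i ^ 2 := by
    rw [euclid_norm_sq]; rfl
  have e2 : ‖y‖ ^ 2 = ∑ i, x i ^ 2 := by rw [euclid_norm_sq]; rfl
  calc ∑ i, (B *ᵥ x) i ^ 2 = _ := e1.symm
    _ ≤ (specNorm B * ‖y‖) ^ 2 := h2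
    _ = specNorm B ^ 2 * ∑ i, x i ^ 2 := by rw [mul_pow, e2]

lemma specNorm_le_one_of (B : Matrix V V ℝ)
    (h : ∀ x : V → ℝ, ∑ i, (B *ᵥ x) i ^ 2 ≤ ∑ i, x i ^ 2) : specNorm B ≤ 1 := by
  apply ContinuousLinearMap.opNorm_le_bound _ zero_le_one
  intro y
  rw [one_mul]
  have e1 : ‖LinearMap.toContinuousLinearMap (Matrix.toEuclideanLin B) y‖ ^ 2
      = ∑ i, (B *ᵥ (WithLp.equiv 2 (V → ℝ) y)) i ^ 2 := by
    rw [euclid_norm_sq]; rfl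
  have e2 : ‖y‖ ^ 2 = ∑ i, (WithLp.equiv 2 (V → ℝ) y) i ^ 2 := by rw [euclid_norm_sq]; rfl
  have h2 : ‖LinearMap.toContinuousLinearMap (Matrix.toEuclideanLin B) y‖ ^ 2 ≤ ‖y‖ ^ 2 := by
    rw [e1, e2]; exact h _
  calc ‖LinearMap.toContinuousLinearMap (Matrix.toEuclideanLin B) y‖
      = Real.sqrt (‖LinearMap.toContinuousLinearMap (Matrix.toEuclideanLin B) y‖ ^ 2) := by
        rw [Real.sqrt_sq (norm_nonneg _)]
    _ ≤ Real.sqrt (‖y‖ ^ 2) := Real.sqrt_le_sqrt h2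
    _ = ‖y‖ := Real.sqrt_sq (norm_nonneg _)

lemma specNorm_nonneg (B : Matrix V V ℝ) : 0 ≤ specNorm B := norm_nonneg _

lemma entry_abs_le_specNorm (U : Matrix V V ℝ) (i j : V) : |U i j| ≤ specNorm U := by
  have h := mulVec_sq_le U (fun l => if l = j then 1 else 0)
  have hx : ∑ l, (fun l => if l = j then (1:ℝ) else 0) l ^ 2 = 1 := by
    simp [ite_pow]
  have hcol : (U *ᵥ fun l => if l = j then (1:ℝ) else 0) i = U i j := by
    simp [Matrix.mulVec, dotProduct]
  have h1 : U i j ^ 2 ≤ specNorm U ^ 2 := by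
    have h2 : (U *ᵥ fun l => if l = j then (1:ℝ) else 0) i ^ 2
        ≤ ∑ l, (U *ᵥ fun l => if l = j then (1:ℝ) else 0) l ^ 2 :=
      Finset.single_le_sum (f := fun l => (U *ᵥ fun l => if l = j then (1:ℝ) else 0) l ^ 2)
        (fun _ _ => sq_nonneg _) (mem_univ i)
    rw [hcol] at h2
    calc U i j ^ 2 ≤ _ := h2
      _ ≤ specNorm U ^ 2 * ∑ l, (fun l => if l = j then (1:ℝ) else 0) l ^ 2 := h
      _ = specNorm U ^ 2 := by rw [hx, mul_one]
  calc |U i j| = Real.sqrt (U i j ^ 2) := (Real.sqrt_sq_eq_abs _).symm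
    _ ≤ Real.sqrt (specNorm U ^ 2) := Real.sqrt_le_sqrt h1
    _ = specNorm U := Real.sqrt_sq (specNorm_nonneg U)

lemma trace_eq (A U : Matrix V V ℝ) :
    Matrix.trace (Aᵀ * U) = ∑ i, ∑ j, A i j * U i j := by
  simp only [Matrix.trace, Matrix.diag, Matrix.mul_apply, Matrix.transpose_apply]
  exact Finset.sum_comm

lemma nuclear_bddAbove (A : Matrix V V ℝ) :
    BddAbove {x : ℝ | ∃ U : Matrix V V ℝ, specNorm U ≤ 1 ∧ x = Matrix.trace (Aᵀ * U)} := by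
  refine ⟨∑ i, ∑ j, |A i j|, ?_⟩
  rintro x ⟨U, hU, rfl⟩
  rw [trace_eq]
  apply Finset.sum_le_sum; intro i _; apply Finset.sum_le_sum; intro j _
  calc A i j * U i j ≤ |A i j * U i j| := le_abs_self _
    _ = |A i j| * |U i j| := abs_mul _ _
    _ ≤ |A i j| * 1 :=
        mul_le_mul_of_nonneg_left ((entry_abs_le_specNorm U i j).trans hU) (abs_nonneg _)
    _ = |A i j| := mul_one _

lemma nuclear_ge (A U : Matrix V V ℝ) (hU : specNorm U ≤ 1) :
    Matrix.trace (Aᵀ * U) ≤ nuclearNorm A :=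
  le_csSup (nuclear_bddAbove A) ⟨U, hU, rfl⟩

lemma nuclear_le (A : Matrix V V ℝ) (c : ℝ)
    (h : ∀ U : Matrix V V ℝ, specNorm U ≤ 1 → Matrix.trace (Aᵀ * U) ≤ c) :
    nuclearNorm A ≤ c := by
  apply csSup_le
  · refine ⟨Matrix.trace (Aᵀ * 0), 0, ?_, rfl⟩
    have h0 : specNorm (0 : Matrix V V ℝ) = 0 := by
      unfold specNorm; rw [map_zero, map_zero, norm_zero]
    rw [h0]; exact zero_le_one
  · rintro x ⟨U, hU, rfl⟩; exact h U hU

set_option maxHeartbeats 1000000 in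
/-- If there exist multipliers `F, W`, `λ ≥ 0`, `M ≥ 0` satisfying the
stated KKT conditions at `(X̄, Ȳ)` (with `X̄ = v̄v̄ᵀ` for the characteristic vector of a
`k`-subset `V̄`, `Ȳ = −P_{Ẽ}(X̄)`, and `Ω = (V̄×V̄) ∩ Ẽ`), then `(X̄, Ȳ)` is an optimal
solution of `min{‖X‖_* + γ‖Y‖₁ : eᵀXe = k², X+Y = 0 on Ẽ, X ∈ [0,1]^{V×V}}`. -/
theorem stmt19 (G : SimpleGraph V) [DecidableRel G.Adj]
    (k : ℕ) (hk : 1 ≤ k) (γ : ℝ) (hγ : 0 < γ)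
    (Vb : Finset V) (hVb : Vb.card = k)
    (vb : V → ℝ) (hvb : ∀ i, vb i = if i ∈ Vb then 1 else 0)
    (Xb Yb : Matrix V V ℝ) (hXb : Xb = Matrix.vecMulVec vb vb)
    (hYb : ∀ i j, Yb i j = if i ≠ j ∧ ¬ G.Adj i j then -(Xb i j) else 0)
    (F W M : Matrix V V ℝ) (lam : ℝ) (hlam : 0 ≤ lam)
    (hM : ∀ i j, 0 ≤ M i j)
    -- stationarity: X̄/k + W − λeeᵀ − γ(Ȳ + F) + M = 0
    (hstat : (1 / (k : ℝ)) • Xb + W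
      - lam • Matrix.vecMulVec (fun _ => (1 : ℝ)) (fun _ => (1 : ℝ))
      - γ • (Yb + F) + M = 0)
    (hWv : W *ᵥ vb = 0) (hWtv : Wᵀ *ᵥ vb = 0) (hWnorm : specNorm W ≤ 1)
    -- P_Ω(F) = 0 where Ω = (V̄×V̄) ∩ Ẽ
    (hFΩ : ∀ i j, (i ∈ Vb ∧ j ∈ Vb ∧ i ≠ j ∧ ¬ G.Adj i j) → F i j = 0)
    (hFinf : ∀ i j, |F i j| ≤ 1)
    -- F vanishes on E ∪ {vv : v ∈ V}
    (hFE : ∀ i j, (G.Adj i j ∨ i = j) → F i j = 0)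
    -- M vanishes off V̄ × V̄
    (hMoff : ∀ i j, ¬ (i ∈ Vb ∧ j ∈ Vb) → M i j = 0)
    -- feasibility predicate for the convex program
    (Feas : Matrix V V ℝ → Matrix V V ℝ → Prop)
    (hFeas : ∀ X Y, Feas X Y ↔
      ((∑ i, ∑ j, X i j) = (k : ℝ) ^ 2 ∧
       (∀ i j, (i ≠ j ∧ ¬ G.Adj i j) → X i j + Y i j = 0) ∧
       (∀ i j, 0 ≤ X i j ∧ X i j ≤ 1))) :
    Feas Xb Yb ∧
    ∀ X Y, Feas X Y →
      nuclearNorm Xb + γ * l1Norm Yb ≤ nuclearNorm X + γ * l1Norm Y := by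
  have hk0 : (0:ℝ) < (k:ℝ) := by exact_mod_cast hk
  have hkne : (k:ℝ) ≠ 0 := ne_of_gt hk0
  have hvb01 : ∀ i, vb i = 0 ∨ vb i = 1 := by
    intro i; rw [hvb]; by_cases h : i ∈ Vb <;> simp [h]
  have hvbsq : ∀ i, vb i * vb i = vb i := by
    intro i; rcases hvb01 i with h | h <;> rw [h] <;> ring
  have hsum_vb : ∑ i, vb i = (k:ℝ) := by
    simp only [hvb]
    rw [Finset.sum_ite_mem, Finset.univ_inter, Finset.sum_const, hVb]
    simp
  have hXbe : ∀ i j, Xb i j = vb i * vb j := by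
    intro i j; rw [hXb]; rfl
  have hXb01 : ∀ i j, Xb i j = 0 ∨ Xb i j = 1 := by
    intro i j; rw [hXbe]
    rcases hvb01 i with h | h <;> rcases hvb01 j with h' | h' <;> rw [h, h'] <;> simp
  have hXbsq : ∀ i j, Xb i j * Xb i j = Xb i j := by
    intro i j; rcases hXb01 i j with h | h <;> rw [h] <;> ring
  have hXbsum : ∑ i, ∑ j, Xb i j = (k:ℝ)^2 := by
    have : ∀ i, ∑ j, Xb i j = vb i * (k:ℝ) := by
      intro i
      simp only [hXbe]
      rw [← Finset.mul_sum, hsum_vb]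
    rw [Finset.sum_congr rfl (fun i _ => this i), ← Finset.sum_mul, hsum_vb]
    ring
  -- entrywise stationarity
  have hstat' : ∀ i j, (1/(k:ℝ)) * Xb i j + W i j = lam + γ * (Yb i j + F i j) - M i j := by
    intro i j
    have h := congrFun (congrFun hstat i) j
    simp only [Matrix.add_apply, Matrix.sub_apply, Matrix.smul_apply, Matrix.zero_apply,
      Matrix.vecMulVec_apply, smul_eq_mul, mul_one] at h
    linarith
  -- the dual certificate
  set Dm : Matrix V V ℝ := (1/(k:ℝ)) • Xb + W with hDmdef
  have hDme : ∀ i j, Dm i j = (1/(k:ℝ)) * Xb i j + W i j := by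
    intro i j; rfl
  have hDm : ∀ i j, Dm i j = lam + γ * (Yb i j + F i j) - M i j := by
    intro i j; rw [hDme]; exact hstat' i j
  -- spectral norm of the certificate
  have hDnorm : specNorm Dm ≤ 1 := by
    apply specNorm_le_one_of
    intro x
    set c : ℝ := ∑ j, vb j * x j with hc
    have hDx : ∀ i, (Dm *ᵥ x) i = vb i * (c / (k:ℝ)) + (W *ᵥ x) i := by
      intro i
      simp only [Matrix.mulVec, dotProduct, hDme, hXbe]
      calc ∑ j, (1/(k:ℝ) * (vb i * vb j) + W i j) * x j
          = (vb i / (k:ℝ)) * ∑ j, vb j * x j + ∑ j, W i j * x j := by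
            rw [Finset.mul_sum, ← Finset.sum_add_distrib]
            apply Finset.sum_congr rfl; intro j _; field_simp
        _ = vb i * (c / (k:ℝ)) + ∑ j, W i j * x j := by rw [← hc]; ring
    have hWx_vb : ∑ i, vb i * (W *ᵥ x) i = 0 := by
      have : ∑ i, vb i * (W *ᵥ x) i = ∑ j, x j * (Wᵀ *ᵥ vb) j := by
        simp only [Matrix.mulVec, dotProduct, Matrix.transpose_apply, Finset.mul_sum]
        rw [Finset.sum_comm]
        apply Finset.sum_congr rfl; intro j _
        apply Finset.sum_congr rfl; intro i _; ring
      rw [this, hWtv]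
      simp
    have hWxq : W *ᵥ x = W *ᵥ (fun i => x i - (c / (k:ℝ)) * vb i) := by
      have hfun : (fun i => x i - (c / (k:ℝ)) * vb i) = x - (c / (k:ℝ)) • vb := rfl
      rw [hfun, Matrix.mulVec_sub, Matrix.mulVec_smul, hWv]
      simp
    have hWq : ∑ i, (W *ᵥ x) i ^ 2 ≤ ∑ i, (x i - (c / (k:ℝ)) * vb i) ^ 2 := by
      rw [hWxq]
      calc ∑ i, (W *ᵥ fun i => x i - c / (k:ℝ) * vb i) i ^ 2
          ≤ specNorm W ^ 2 * ∑ i, (x i - c / (k:ℝ) * vb i) ^ 2 := mulVec_sq_le _ _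
        _ ≤ 1 * ∑ i, (x i - c / (k:ℝ) * vb i) ^ 2 := by
            apply mul_le_mul_of_nonneg_right _ (by positivity)
            nlinarith [specNorm_nonneg W]
        _ = _ := one_mul _
    have hqsum : ∑ i, (x i - (c / (k:ℝ)) * vb i) ^ 2 = (∑ i, x i ^ 2) - c^2 / (k:ℝ) := by
      have hterm : ∀ i, (x i - (c / (k:ℝ)) * vb i) ^ 2
          = x i ^ 2 - (2 * c / (k:ℝ)) * (vb i * x i) + (c^2 / (k:ℝ)^2) * vb i := by
        intro i
        have h2 := hvbsq i
        have e : (x i - (c / (k:ℝ)) * vb i) ^ 2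
            = x i ^ 2 - (2 * c / (k:ℝ)) * (vb i * x i) + (c^2 / (k:ℝ)^2) * (vb i * vb i) := by
          ring
        rw [e, h2]
      rw [Finset.sum_congr rfl (fun i _ => hterm i)]
      rw [Finset.sum_add_distrib, Finset.sum_sub_distrib, ← Finset.mul_sum, ← Finset.mul_sum,
        ← hc, hsum_vb]
      field_simp
      ring
    have hexpand : ∑ i, (Dm *ᵥ x) i ^ 2 = c^2 / (k:ℝ) + ∑ i, (W *ᵥ x) i ^ 2 := by
      have hterm : ∀ i, (Dm *ᵥ x) i ^ 2
          = (c^2 / (k:ℝ)^2) * vb i + (2 * c / (k:ℝ)) * (vb i * (W *ᵥ x) i) + (W *ᵥ x) i ^ 2 := by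
        intro i
        rw [hDx i]
        have h2 := hvbsq i
        have e : (vb i * (c / (k:ℝ)) + (W *ᵥ x) i) ^ 2
            = (c^2 / (k:ℝ)^2) * (vb i * vb i) + (2 * c / (k:ℝ)) * (vb i * (W *ᵥ x) i)
              + (W *ᵥ x) i ^ 2 := by
          ring
        rw [e, h2]
      rw [Finset.sum_congr rfl (fun i _ => hterm i)]
      rw [Finset.sum_add_distrib, Finset.sum_add_distrib, ← Finset.mul_sum, ← Finset.mul_sum,
        hsum_vb, hWx_vb]
      field_simp
      ring
    rw [hexpand]
    linarith [hWq, hqsum.le, hqsum.ge]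
  -- |Yb + F| ≤ 1 entrywise
  have hYbF : ∀ i j, |Yb i j + F i j| ≤ 1 := by
    intro i j
    by_cases h : i ≠ j ∧ ¬ G.Adj i j
    · rw [hYb i j, if_pos h]
      by_cases hij : i ∈ Vb ∧ j ∈ Vb
      · rw [hFΩ i j ⟨hij.1, hij.2, h.1, h.2⟩, hXbe]
        simp [hvb, hij.1, hij.2]
      · have hXb0 : Xb i j = 0 := by
          rw [hXbe]
          rcases not_and_or.mp hij with h' | h' <;> simp [hvb, h']
        rw [hXb0]
        simpa using hFinf i j
    · have hor : G.Adj i j ∨ i = j := by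
        rcases not_and_or.mp h with h' | h'
        · right; simpa using h'
        · left; simpa using h'
      rw [hYb i j, if_neg h, hFE i j hor]
      norm_num
  -- pointwise: product (X+Y)(Yb+F) vanishes when X+Y = 0 on the complement
  have hprod : ∀ (X Y : Matrix V V ℝ),
      (∀ i j, (i ≠ j ∧ ¬ G.Adj i j) → X i j + Y i j = 0) →
      ∀ i j, (X i j + Y i j) * (Yb i j + F i j) = 0 := by
    intro X Y h2 i j
    by_cases h : i ≠ j ∧ ¬ G.Adj i j
    · rw [h2 i j h, zero_mul]
    · have hor : G.Adj i j ∨ i = j := by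
        rcases not_and_or.mp h with h' | h'
        · right; simpa using h'
        · left; simpa using h'
      rw [hYb i j, if_neg h, hFE i j hor]
      ring
  -- Feasibility of (Xb, Yb)
  have hfeasb : Feas Xb Yb := by
    rw [hFeas]
    refine ⟨hXbsum, ?_, ?_⟩
    · intro i j h
      rw [hYb i j, if_pos h]; ring
    · intro i j
      rcases hXb01 i j with h | h <;> rw [h] <;> norm_num
  -- lower bound for any feasible point
  have key : ∀ X Y : Matrix V V ℝ, Feas X Y →
      lam * (k:ℝ)^2 - (∑ i, ∑ j, M i j) ≤ nuclearNorm X + γ * l1Norm Y := by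
    intro X Y hXY
    rw [hFeas] at hXY
    obtain ⟨h1, h2, h3⟩ := hXY
    have hA : ∑ i, ∑ j, X i j * Dm i j ≤ nuclearNorm X := by
      have := nuclear_ge X Dm hDnorm
      rwa [trace_eq] at this
    have hB : ∑ i, ∑ j, Y i j * (Yb i j + F i j) ≤ l1Norm Y := by
      unfold l1Norm
      apply Finset.sum_le_sum; intro i _; apply Finset.sum_le_sum; intro j _
      calc Y i j * (Yb i j + F i j) ≤ |Y i j * (Yb i j + F i j)| := le_abs_self _
        _ = |Y i j| * |Yb i j + F i j| := abs_mul _ _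
        _ ≤ |Y i j| * 1 := mul_le_mul_of_nonneg_left (hYbF i j) (abs_nonneg _)
        _ = |Y i j| := mul_one _
    have point : ∀ i j, lam * X i j - M i j
        ≤ X i j * Dm i j + γ * (Y i j * (Yb i j + F i j)) := by
      intro i j
      rw [hDm i j]
      have hz := hprod X Y h2 i j
      have hXM : X i j * M i j ≤ M i j := by
        calc X i j * M i j ≤ 1 * M i j := mul_le_mul_of_nonneg_right (h3 i j).2 (hM i j)
          _ = M i j := one_mul _
      have hexp : X i j * (lam + γ * (Yb i j + F i j) - M i j) + γ * (Y i j * (Yb i j + F i j))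
          = lam * X i j + γ * ((X i j + Y i j) * (Yb i j + F i j)) - X i j * M i j := by
        ring
      rw [hexp, hz, mul_zero, add_zero]
      linarith
    have hC : lam * (k:ℝ)^2 - (∑ i, ∑ j, M i j)
        ≤ (∑ i, ∑ j, X i j * Dm i j) + γ * (∑ i, ∑ j, Y i j * (Yb i j + F i j)) := by
      have e1 : ∑ i, ∑ j, (lam * X i j - M i j)
          = lam * (∑ i, ∑ j, X i j) - ∑ i, ∑ j, M i j := by
        simp [Finset.sum_sub_distrib, Finset.mul_sum]
      have e2 : ∑ i, ∑ j, (X i j * Dm i j + γ * (Y i j * (Yb i j + F i j)))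
          = (∑ i, ∑ j, X i j * Dm i j) + γ * (∑ i, ∑ j, Y i j * (Yb i j + F i j)) := by
        simp [Finset.sum_add_distrib, Finset.mul_sum]
      calc lam * (k:ℝ)^2 - (∑ i, ∑ j, M i j)
          = ∑ i, ∑ j, (lam * X i j - M i j) := by rw [e1, h1]
        _ ≤ ∑ i, ∑ j, (X i j * Dm i j + γ * (Y i j * (Yb i j + F i j))) := by
            apply Finset.sum_le_sum; intro i _; apply Finset.sum_le_sum; intro j _
            exact point i j
        _ = _ := e2
    have hgB := mul_le_mul_of_nonneg_left hB hγ.le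
    linarith
  -- upper bound at (Xb, Yb)
  have hXbnuc : nuclearNorm Xb ≤ (k:ℝ) := by
    apply nuclear_le
    intro U hU
    rw [trace_eq]
    have e1 : ∑ i, ∑ j, Xb i j * U i j = ∑ i, vb i * (U *ᵥ vb) i := by
      apply Finset.sum_congr rfl; intro i _
      simp only [hXbe, Matrix.mulVec, dotProduct, Finset.mul_sum]
      apply Finset.sum_congr rfl; intro j _; ring
    rw [e1]
    have hvbsq2 : ∑ i, vb i ^ 2 = (k:ℝ) := by
      rw [← hsum_vb]
      apply Finset.sum_congr rfl; intro i _
      rw [sq, hvbsq]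
    have hCS := Finset.sum_mul_sq_le_sq_mul_sq Finset.univ vb (fun i => (U *ᵥ vb) i)
    have hU2 : ∑ i, (U *ᵥ vb) i ^ 2 ≤ (k:ℝ) := by
      calc ∑ i, (U *ᵥ vb) i ^ 2 ≤ specNorm U ^ 2 * ∑ i, vb i ^ 2 := mulVec_sq_le U vb
        _ ≤ 1 * (k:ℝ) := by
            rw [hvbsq2]
            apply mul_le_mul_of_nonneg_right _ hk0.le
            nlinarith [specNorm_nonneg U]
        _ = (k:ℝ) := one_mul _
    have hsq : (∑ i, vb i * (U *ᵥ vb) i)^2 ≤ (k:ℝ)^2 := by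
      calc (∑ i, vb i * (U *ᵥ vb) i)^2
          ≤ (∑ i, vb i ^ 2) * ∑ i, (U *ᵥ vb) i ^ 2 := hCS
        _ ≤ (k:ℝ) * (k:ℝ) := by
            rw [hvbsq2]
            exact mul_le_mul_of_nonneg_left hU2 hk0.le
        _ = (k:ℝ)^2 := (sq (k:ℝ)).symm
    nlinarith [hsq, hk0.le]
  have hYb01 : ∀ i j, Yb i j = 0 ∨ Yb i j = -1 := by
    intro i j
    rw [hYb i j]
    by_cases h : i ≠ j ∧ ¬ G.Adj i j
    · rw [if_pos h]
      rcases hXb01 i j with h' | h' <;> rw [h'] <;> simp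
    · rw [if_neg h]; left; rfl
  have hYbl1 : l1Norm Yb = ∑ i, ∑ j, Yb i j * (Yb i j + F i j) := by
    unfold l1Norm
    apply Finset.sum_congr rfl; intro i _; apply Finset.sum_congr rfl; intro j _
    rcases hYb01 i j with h | h
    · rw [h]; simp
    · have hne : i ≠ j ∧ ¬ G.Adj i j := by
        by_contra hcon
        rw [hYb i j, if_neg hcon] at h
        norm_num at h
      have hXb1 : Xb i j = 1 := by
        have := hYb i j
        rw [if_pos hne, h] at this
        linarith
      have hij : i ∈ Vb ∧ j ∈ Vb := by
        by_contra hcon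
        rw [hXbe] at hXb1
        rcases not_and_or.mp hcon with h' | h' <;> simp [hvb, h'] at hXb1
      rw [hFΩ i j ⟨hij.1, hij.2, hne.1, hne.2⟩, h]
      norm_num
  have hXbD : ∑ i, ∑ j, Xb i j * Dm i j = (k:ℝ) := by
    have hterm : ∀ i j, Xb i j * Dm i j = (1/(k:ℝ)) * Xb i j + Xb i j * W i j := by
      intro i j
      rw [hDme i j]
      have h2 := hXbsq i j
      have e : Xb i j * ((1/(k:ℝ)) * Xb i j + W i j)
          = (1/(k:ℝ)) * (Xb i j * Xb i j) + Xb i j * W i j := by ring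
      rw [e, h2]
    have hXbW : ∑ i, ∑ j, Xb i j * W i j = 0 := by
      have : ∀ i, ∑ j, Xb i j * W i j = vb i * (W *ᵥ vb) i := by
        intro i
        simp only [hXbe, Matrix.mulVec, dotProduct, Finset.mul_sum]
        apply Finset.sum_congr rfl; intro j _; ring
      rw [Finset.sum_congr rfl (fun i _ => this i), hWv]
      simp
    calc ∑ i, ∑ j, Xb i j * Dm i j
        = ∑ i, ∑ j, ((1/(k:ℝ)) * Xb i j + Xb i j * W i j) := by
          apply Finset.sum_congr rfl; intro i _; apply Finset.sum_congr rfl; intro j _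
          exact hterm i j
      _ = (1/(k:ℝ)) * (∑ i, ∑ j, Xb i j) + ∑ i, ∑ j, Xb i j * W i j := by
          simp [Finset.sum_add_distrib, Finset.mul_sum]
      _ = (1/(k:ℝ)) * (k:ℝ)^2 + 0 := by rw [hXbsum, hXbW]
      _ = (k:ℝ) := by field_simp; ring
  have hXbM : ∀ i j, Xb i j * M i j = M i j := by
    intro i j
    by_cases h : i ∈ Vb ∧ j ∈ Vb
    · have h1 : Xb i j = 1 := by rw [hXbe]; simp [hvb, h.1, h.2]
      rw [h1, one_mul]
    · rw [hMoff i j h, mul_zero]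
  have hpointb : ∀ i j, Xb i j * Dm i j + γ * (Yb i j * (Yb i j + F i j))
      = lam * Xb i j - M i j := by
    intro i j
    rw [hDm i j]
    have hz : (Xb i j + Yb i j) * (Yb i j + F i j) = 0 := by
      apply hprod Xb Yb _ i j
      intro i' j' h'
      rw [hYb i' j', if_pos h']; ring
    have hXMij := hXbM i j
    have hexp : Xb i j * (lam + γ * (Yb i j + F i j) - M i j) + γ * (Yb i j * (Yb i j + F i j))
        = lam * Xb i j + γ * ((Xb i j + Yb i j) * (Yb i j + F i j)) - Xb i j * M i j := by
      ring
    rw [hexp, hz, mul_zero, add_zero, hXMij]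
  have hub : nuclearNorm Xb + γ * l1Norm Yb ≤ lam * (k:ℝ)^2 - ∑ i, ∑ j, M i j := by
    have hsum : (∑ i, ∑ j, Xb i j * Dm i j)
        + γ * (∑ i, ∑ j, Yb i j * (Yb i j + F i j))
        = lam * (k:ℝ)^2 - ∑ i, ∑ j, M i j := by
      have e2 : ∑ i, ∑ j, (Xb i j * Dm i j + γ * (Yb i j * (Yb i j + F i j)))
          = (∑ i, ∑ j, Xb i j * Dm i j) + γ * (∑ i, ∑ j, Yb i j * (Yb i j + F i j)) := by
        simp [Finset.sum_add_distrib, Finset.mul_sum]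
      have e1 : ∑ i, ∑ j, (lam * Xb i j - M i j)
          = lam * (∑ i, ∑ j, Xb i j) - ∑ i, ∑ j, M i j := by
        simp [Finset.sum_sub_distrib, Finset.mul_sum]
      rw [← e2, Finset.sum_congr rfl (fun i _ => Finset.sum_congr rfl
        (fun j _ => hpointb i j)), e1, hXbsum]
    rw [hYbl1]
    rw [hXbD] at hsum
    linarith
  exact ⟨hfeasb, fun X Y hXY => le_trans hub (key X Y hXY)⟩
end
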